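/- Define f_d(x_d) = x_d and f_i(x_d,…,x_i) = 3^{f_{i+1}(x_d,…,x_{i+1})} · x_i for k ≤ i < d. Suppose nonnegative integer tuples (x_d,…,x_k) and (y_d,…,y_k) satisfy: x_t = y_t for t > m, x_m ≤ y_m − 1, and x_t ≤ 2 y_t for k ≤ t < m, where k ≤ m ≤ d, and f_s(y_d,…,y_s) ≥ 3 for all s < d with y's positive. Then f_t(x_d,…,x_t) ≤ f_t(y_d,…,y_t) − 1 for all k ≤ t ≤ m, and in particular f_k(x_d,…,x_k) < f_k(y_d,…,y_k). -/

import Mathlib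

/-- The tower function `f_i(x_d, …, x_i)` defined by `f_d(x_d) = x_d` and
`f_i = 3 ^ f_{i+1} · x_i` for `i < d`. -/
def towerF (x : ℕ → ℕ) (d i : ℕ) : ℕ :=
  if h : i < d then 3 ^ (towerF x d (i + 1)) * x i else x d
termination_by d - i
decreasing_by omega

lemma towerF_of_lt {x : ℕ → ℕ} {d i : ℕ} (h : i < d) :
    towerF x d i = 3 ^ (towerF x d (i + 1)) * x i := by
  rw [towerF]; simp [h]

lemma towerF_of_ge {x : ℕ → ℕ} {d i : ℕ} (h : ¬ i < d) :
    towerF x d i = x d := by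
  rw [towerF]; simp [h]

lemma towerF_pos {x : ℕ → ℕ} {d i : ℕ} (hx : ∀ j, i ≤ j → j ≤ d → 0 < x j)
    (hid : i ≤ d) : 0 < towerF x d i := by
  by_cases h : i < d
  · rw [towerF_of_lt h]
    exact Nat.mul_pos (Nat.pow_pos (by norm_num)) (hx i le_rfl hid)
  · rw [towerF_of_ge h]
    exact hx d (by omega) le_rfl

lemma towerF_congr {x y : ℕ → ℕ} {d : ℕ} (i : ℕ) (hid : i ≤ d)
    (h : ∀ j, i ≤ j → j ≤ d → x j = y j) : towerF x d i = towerF y d i := by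
  by_cases hlt : i < d
  · rw [towerF_of_lt hlt, towerF_of_lt hlt,
      towerF_congr (i + 1) hlt (fun j h1 h2 => h j (by omega) h2),
      h i le_rfl (le_of_lt hlt)]
  · rw [towerF_of_ge hlt, towerF_of_ge hlt, h d hid le_rfl]
termination_by d - i
decreasing_by omega

theorem stmt_17 (k m d : ℕ) (hkm : k ≤ m) (hmd : m ≤ d)
    (x y : ℕ → ℕ)
    (hxpos : ∀ i, k ≤ i → i ≤ d → 0 < x i)
    (hypos : ∀ i, k ≤ i → i ≤ d → 0 < y i)
    (heq : ∀ t, m < t → t ≤ d → x t = y t)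
    (hm : x m ≤ y m - 1)
    (hdbl : ∀ t, k ≤ t → t < m → x t ≤ 2 * y t)
    (h3 : ∀ s, k ≤ s → s < d → 3 ≤ towerF y d s) :
    (∀ t, k ≤ t → t ≤ m → towerF x d t ≤ towerF y d t - 1) ∧
      towerF x d k < towerF y d k := by
  -- key lemma by induction on m - t
  have key : ∀ n t, t + n = m → k ≤ t → towerF x d t ≤ towerF y d t - 1 := by
    intro n
    induction n with
    | zero =>
      intro t ht hkt
      have htm : t = m := by omega
      subst htm
      by_cases h : t < d
      · rw [towerF_of_lt h, towerF_of_lt h]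
        have hcongr : towerF x d (t + 1) = towerF y d (t + 1) :=
          towerF_congr (t + 1) h (fun j h1 h2 => heq j (by omega) h2)
        rw [hcongr]
        set B := towerF y d (t + 1) with hB
        have hBpos : 0 < 3 ^ B := Nat.pow_pos (by norm_num)
        have hym : 0 < y t := hypos t hkt (by omega)
        have h1 : 3 ^ B * x t + 3 ^ B ≤ 3 ^ B * y t := by
          calc 3 ^ B * x t + 3 ^ B = 3 ^ B * (x t + 1) := by ring
          _ ≤ 3 ^ B * y t := Nat.mul_le_mul_left _ (by omega)
        omega
      · rw [towerF_of_ge h, towerF_of_ge h]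
        have : t = d := by omega
        subst this
        exact hm
    | succ n ih =>
      intro t ht hkt
      have htm : t < m := by omega
      have htd : t < d := by omega
      have hA : towerF x d (t + 1) ≤ towerF y d (t + 1) - 1 :=
        ih (t + 1) (by omega) (by omega)
      have hBpos : 0 < towerF y d (t + 1) :=
        towerF_pos (fun j h1 h2 => hypos j (by omega) h2) (by omega)
      rw [towerF_of_lt htd, towerF_of_lt htd]
      set A := towerF x d (t + 1) with hAdef
      set B := towerF y d (t + 1) with hBdef
      have hxt : x t ≤ 2 * y t := hdbl t hkt htm
      have hyt : 0 < y t := hypos t hkt (by omega)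
      have hpow : 3 ^ A ≤ 3 ^ (B - 1) := Nat.pow_le_pow_right (by norm_num) (by omega)
      have hBsplit : 3 ^ B = 3 * 3 ^ (B - 1) := by
        calc 3 ^ B = 3 ^ (B - 1 + 1) := by congr 1; omega
        _ = 3 * 3 ^ (B - 1) := by rw [pow_succ]; ring
      have h1 : 3 ^ A * x t ≤ 3 ^ (B - 1) * (2 * y t) :=
        Nat.mul_le_mul hpow hxt
      have h2 : 1 ≤ 3 ^ (B - 1) * y t :=
        Nat.one_le_iff_ne_zero.mpr (by positivity)
      have h3' : 3 ^ B * y t = 3 * (3 ^ (B - 1) * y t) := by rw [hBsplit]; ring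
      have h1' : 3 ^ A * x t ≤ 2 * (3 ^ (B - 1) * y t) := by
        calc 3 ^ A * x t ≤ 3 ^ (B - 1) * (2 * y t) := h1
        _ = 2 * (3 ^ (B - 1) * y t) := by ring
      omega
  constructor
  · intro t hkt htm
    exact key (m - t) t (by omega) hkt
  · have hk := key (m - k) k (by omega) le_rfl
    have hpos : 0 < towerF y d k := towerF_pos hypos (by omega)
    omega
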